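/- For the helically symmetric potentials A¹ = a₁ cos(z/k + a₂) + λ₁y, A² = a₁ sin(z/k + a₂), A³ = 0, Φ = λ₂ z/k (constants a₁, a₂, λ₁, λ₂, k with k ≠ 0), the vector field X₃ = x∂_y − y∂ₓ + k∂_z is a Lie point symmetry of the system ẍⁱ = Σⱼ ẋʲ(∂ⱼAⁱ − ∂ᵢAʲ) − ∂ᵢΦ, in the sense that the potentials satisfy the classifying equations: the directional derivative of Φ along the spatial flow of X₃ equals zero plus the inhomogeneity λ₂, i.e. (x∂_y − y∂ₓ + k∂_z)Φ = λ₂, and there exists a gauge function f with (x∂_y − y∂ₓ + k∂_z)Aⁱ = −εᵢⱼ₃ Aʲ + ∂ᵢf for i = 1,2,3. -/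

import Mathlib

/-- Partial derivative `∂ⱼ f (p)`, via the one-variable derivative along the `j`-th axis. -/
noncomputable def pd (j : Fin 3) (f : (Fin 3 → ℝ) → ℝ) (p : Fin 3 → ℝ) : ℝ :=
  deriv (fun s => f (Function.update p j s)) (p j)

/-- The spatial part of the screw-motion symmetry generator
`X₃ = x∂_y − y∂ₓ + k∂_z`, acting on scalar functions. -/
noncomputable def Xop (k : ℝ) (g : (Fin 3 → ℝ) → ℝ) (p : Fin 3 → ℝ) : ℝ :=
  p 0 * pd 1 g p - p 1 * pd 0 g p + k * pd 2 g p

/-- For the helically symmetric potentials `A¹ = a₁cos(z/k + a₂) + λ₁y`,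
`A² = a₁sin(z/k + a₂)`, `A³ = 0`, `Φ = λ₂z/k` (with `k ≠ 0`), the field
`X₃ = x∂_y − y∂ₓ + k∂_z` satisfies the classifying equations: `X₃Φ = λ₂` and
there is a gauge function `f` with `X₃A¹ = −A² + ∂ₓf`, `X₃A² = A¹ + ∂_yf`,
`X₃A³ = ∂_zf`. -/
theorem stmt_15
    (a₁ a₂ lam₁ lam₂ k : ℝ) (hk : k ≠ 0)
    (A : Fin 3 → (Fin 3 → ℝ) → ℝ) (Φ : (Fin 3 → ℝ) → ℝ)
    (hA0 : ∀ p, A 0 p = a₁ * Real.cos (p 2 / k + a₂) + lam₁ * p 1)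
    (hA1 : ∀ p, A 1 p = a₁ * Real.sin (p 2 / k + a₂))
    (hA2 : ∀ p, A 2 p = 0)
    (hΦ : ∀ p, Φ p = lam₂ * p 2 / k) :
    (∀ p, Xop k Φ p = lam₂) ∧
    ∃ f : (Fin 3 → ℝ) → ℝ, Differentiable ℝ f ∧
      ∀ p, Xop k (A 0) p = -(A 1 p) + pd 0 f p ∧
           Xop k (A 1) p = A 0 p + pd 1 f p ∧
           Xop k (A 2) p = pd 2 f p := by
  constructor
  · intro p
    unfold Xop pd
    have h0 : (fun s => Φ (Function.update p 0 s)) = fun _ => lam₂ * p 2 / k := by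
      funext s; rw [hΦ]; simp [Function.update]
    have h1 : (fun s => Φ (Function.update p 1 s)) = fun _ => lam₂ * p 2 / k := by
      funext s; rw [hΦ]; simp [Function.update]
    have h2 : (fun s => Φ (Function.update p 2 s)) = fun s => lam₂ * s / k := by
      funext s; rw [hΦ]; simp
    rw [h0, h1, h2]
    have hd : HasDerivAt (fun s : ℝ => lam₂ * s / k) (lam₂ / k) (p 2) := by
      simpa using ((hasDerivAt_id (p 2)).const_mul lam₂).div_const k
    rw [hd.deriv]
    simp
    field_simp
  · refine ⟨fun p => lam₁ * ((p 0) ^ 2 - (p 1) ^ 2) / 2, ?_, ?_⟩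
    · fun_prop
    · intro p
      unfold Xop pd
      -- derivatives of f
      have hf0 : deriv (fun s => lam₁ * ((Function.update p 0 s 0) ^ 2 - (Function.update p 0 s 1) ^ 2) / 2) (p 0) = lam₁ * p 0 := by
        have : (fun s : ℝ => lam₁ * ((Function.update p 0 s 0) ^ 2 - (Function.update p 0 s 1) ^ 2) / 2)
            = fun s : ℝ => lam₁ * (s ^ 2 - (p 1) ^ 2) / 2 := by
          funext s; simp [Function.update]
        rw [this]
        have hd : HasDerivAt (fun s : ℝ => lam₁ * (s ^ 2 - (p 1) ^ 2) / 2) (lam₁ * p 0) (p 0) := by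
          have := (((hasDerivAt_pow 2 (p 0)).sub_const ((p 1) ^ 2)).const_mul lam₁).div_const (2:ℝ)
          refine this.congr_deriv ?_; norm_num; ring
        exact hd.deriv
      have hf1 : deriv (fun s => lam₁ * ((Function.update p 1 s 0) ^ 2 - (Function.update p 1 s 1) ^ 2) / 2) (p 1) = -(lam₁ * p 1) := by
        have : (fun s : ℝ => lam₁ * ((Function.update p 1 s 0) ^ 2 - (Function.update p 1 s 1) ^ 2) / 2)
            = fun s : ℝ => lam₁ * ((p 0) ^ 2 - s ^ 2) / 2 := by
          funext s; simp [Function.update]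
        rw [this]
        have hd : HasDerivAt (fun s : ℝ => lam₁ * ((p 0) ^ 2 - s ^ 2) / 2) (-(lam₁ * p 1)) (p 1) := by
          have := (((hasDerivAt_pow 2 (p 1)).const_sub ((p 0) ^ 2)).const_mul lam₁).div_const (2:ℝ)
          refine this.congr_deriv ?_; norm_num; ring
        exact hd.deriv
      have hf2 : deriv (fun s => lam₁ * ((Function.update p 2 s 0) ^ 2 - (Function.update p 2 s 1) ^ 2) / 2) (p 2) = 0 := by
        have : (fun s : ℝ => lam₁ * ((Function.update p 2 s 0) ^ 2 - (Function.update p 2 s 1) ^ 2) / 2)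
            = fun _ : ℝ => lam₁ * ((p 0) ^ 2 - (p 1) ^ 2) / 2 := by
          funext s; simp [Function.update]
        rw [this, deriv_const]
      -- derivatives of A 0
      have hA00 : deriv (fun s => A 0 (Function.update p 0 s)) (p 0) = 0 := by
        have : (fun s : ℝ => A 0 (Function.update p 0 s))
            = fun _ : ℝ => a₁ * Real.cos (p 2 / k + a₂) + lam₁ * p 1 := by
          funext s; rw [hA0]; simp [Function.update]
        rw [this, deriv_const]
      have hA01 : deriv (fun s => A 0 (Function.update p 1 s)) (p 1) = lam₁ := by
        have h : (fun s : ℝ => A 0 (Function.update p 1 s))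
            = fun s : ℝ => a₁ * Real.cos (p 2 / k + a₂) + lam₁ * s := by
          funext s; rw [hA0]; simp [Function.update]
        rw [h]
        have hd : HasDerivAt (fun s : ℝ => a₁ * Real.cos (p 2 / k + a₂) + lam₁ * s) lam₁ (p 1) := by
          simpa using ((hasDerivAt_id (p 1)).const_mul lam₁).const_add (a₁ * Real.cos (p 2 / k + a₂))
        exact hd.deriv
      have hA02 : deriv (fun s => A 0 (Function.update p 2 s)) (p 2)
          = -(a₁ * Real.sin (p 2 / k + a₂)) / k := by
        have h : (fun s : ℝ => A 0 (Function.update p 2 s))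
            = fun s : ℝ => a₁ * Real.cos (s / k + a₂) + lam₁ * p 1 := by
          funext s; rw [hA0]; simp [Function.update]
        rw [h]
        have hinner : HasDerivAt (fun s : ℝ => s / k + a₂) (1 / k) (p 2) := by
          simpa using ((hasDerivAt_id (p 2)).div_const k).add_const a₂
        have hd : HasDerivAt (fun s : ℝ => a₁ * Real.cos (s / k + a₂) + lam₁ * p 1)
            (-(a₁ * Real.sin (p 2 / k + a₂)) / k) (p 2) := by
          have := ((hinner.cos).const_mul a₁).add_const (lam₁ * p 1)
          refine this.congr_deriv ?_; norm_num; ring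
        exact hd.deriv
      -- derivatives of A 1
      have hA10 : deriv (fun s => A 1 (Function.update p 0 s)) (p 0) = 0 := by
        have : (fun s : ℝ => A 1 (Function.update p 0 s))
            = fun _ : ℝ => a₁ * Real.sin (p 2 / k + a₂) := by
          funext s; rw [hA1]; simp [Function.update]
        rw [this, deriv_const]
      have hA11 : deriv (fun s => A 1 (Function.update p 1 s)) (p 1) = 0 := by
        have : (fun s : ℝ => A 1 (Function.update p 1 s))
            = fun _ : ℝ => a₁ * Real.sin (p 2 / k + a₂) := by
          funext s; rw [hA1]; simp [Function.update]
        rw [this, deriv_const]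
      have hA12 : deriv (fun s => A 1 (Function.update p 2 s)) (p 2)
          = a₁ * Real.cos (p 2 / k + a₂) / k := by
        have h : (fun s : ℝ => A 1 (Function.update p 2 s))
            = fun s : ℝ => a₁ * Real.sin (s / k + a₂) := by
          funext s; rw [hA1]; simp [Function.update]
        rw [h]
        have hinner : HasDerivAt (fun s : ℝ => s / k + a₂) (1 / k) (p 2) := by
          simpa using ((hasDerivAt_id (p 2)).div_const k).add_const a₂
        have hd : HasDerivAt (fun s : ℝ => a₁ * Real.sin (s / k + a₂))
            (a₁ * Real.cos (p 2 / k + a₂) / k) (p 2) := by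
          have := (hinner.sin).const_mul a₁
          refine this.congr_deriv ?_; norm_num; ring
        exact hd.deriv
      -- derivatives of A 2
      have hA20 : deriv (fun s => A 2 (Function.update p 0 s)) (p 0) = 0 := by
        have : (fun s : ℝ => A 2 (Function.update p 0 s)) = fun _ : ℝ => (0 : ℝ) := by
          funext s; rw [hA2]
        rw [this, deriv_const]
      have hA21 : deriv (fun s => A 2 (Function.update p 1 s)) (p 1) = 0 := by
        have : (fun s : ℝ => A 2 (Function.update p 1 s)) = fun _ : ℝ => (0 : ℝ) := by
          funext s; rw [hA2]
        rw [this, deriv_const]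
      have hA22 : deriv (fun s => A 2 (Function.update p 2 s)) (p 2) = 0 := by
        have : (fun s : ℝ => A 2 (Function.update p 2 s)) = fun _ : ℝ => (0 : ℝ) := by
          funext s; rw [hA2]
        rw [this, deriv_const]
      refine ⟨?_, ?_, ?_⟩
      · rw [hA00, hA01, hA02, hf0, hA1]; field_simp; ring
      · rw [hA10, hA11, hA12, hf1, hA0]; field_simp; ring
      · simp [hA20, hA21, hA22, hf2]
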